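/- For n ≥ 2, the factor complexity of the finite Fibonacci word f_n is given by: for 1 ≤ k ≤ F(n−2), p_k(f_n) = k+1; for F(n−2)+1 ≤ k ≤ F(n−1)−1, p_k(f_n) = F(n−2)+2; and for F(n−1) ≤ k ≤ F(n), p_k(f_n) = F(n)+1−k. -/

import Mathlib

/-- Fibonacci numbers: F(0)=1, F(1)=1, F(n+2)=F(n+1)+F(n). -/
def F : ℕ → ℕ
  | 0 => 1
  | 1 => 1
  | n + 2 => F (n + 1) + F n

/-- Finite Fibonacci words over {a,b} coded as Fin 2 (a=0, b=1). -/
def fibWord : ℕ → List (Fin 2)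
  | 0 => [0]
  | 1 => [1]
  | n + 2 => fibWord (n + 1) ++ fibWord n

/-- Number of distinct length-k factors of a word. -/
noncomputable def pk (w : List (Fin 2)) (k : ℕ) : ℕ :=
  {v : List (Fin 2) | v.length = k ∧ v <:+: w}.ncard

lemma F_pos (n : ℕ) : 0 < F n := by
  induction n using Nat.strong_induction_on with
  | _ n ih =>
    match n with
    | 0 => simp [F]
    | 1 => simp [F]
    | n + 2 => simp [F]; exact Or.inl (ih (n+1) (by omega))

lemma F_add2 (n : ℕ) : F (n+2) = F (n+1) + F n := rfl

lemma F_le_succ (n : ℕ) : F n ≤ F (n+1) := by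
  match n with
  | 0 => simp [F]
  | n + 1 => rw [F_add2]; have := F_pos n; omega

lemma F_mono {m n : ℕ} (h : m ≤ n) : F m ≤ F n := by
  induction n with
  | zero => simp_all
  | succ n ih =>
    rcases Nat.lt_or_ge m (n+1) with h'|h'
    · exact le_trans (ih (by omega)) (F_le_succ n)
    · have : m = n+1 := by omega
      simp [this]

lemma le_F (n : ℕ) : n ≤ F n := by
  induction n using Nat.strong_induction_on with
  | _ n ih =>
    match n with
    | 0 => simp [F]
    | 1 => simp [F]
    | n + 2 =>
      rw [F_add2]
      have h1 := ih (n+1) (by omega)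
      have h2 := F_pos n
      omega

lemma length_fibWord (n : ℕ) : (fibWord n).length = F n := by
  induction n using Nat.strong_induction_on with
  | _ n ih =>
    match n with
    | 0 => rfl
    | 1 => rfl
    | n + 2 =>
      show (fibWord (n+1) ++ fibWord n).length = F (n+1) + F n
      rw [List.length_append, ih (n+1) (by omega), ih n (by omega)]


/-- The infinite Fibonacci word, as a function. -/
def ψ (i : ℕ) : Fin 2 := (fibWord (i+2)).getD i 0

lemma fibWord_succ_getD {m i : ℕ} (hm : 1 ≤ m) (h : i < F m) :
    (fibWord (m+1)).getD i 0 = (fibWord m).getD i 0 := by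
  match m, hm with
  | j + 1, _ =>
    show (fibWord (j+1) ++ fibWord j).getD i 0 = _
    rw [List.getD_append _ _ _ _ (by rw [length_fibWord]; exact h)]

lemma fibWord_add_getD {m i : ℕ} (hm : 1 ≤ m) (h : i < F m) (K : ℕ) :
    (fibWord (m+K)).getD i 0 = (fibWord m).getD i 0 := by
  induction K with
  | zero => rfl
  | succ K ih =>
    have h2 : i < F (m+K) := lt_of_lt_of_le h (F_mono (by omega))
    have e : m + (K+1) = (m+K)+1 := by omega
    rw [e, fibWord_succ_getD (by omega) h2, ih]

lemma psi_spec {n i : ℕ} (hn : 1 ≤ n) (h : i < F n) :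
    (fibWord n).getD i 0 = ψ i := by
  have hi2 : i < F (i+2) := lt_of_lt_of_le (by omega) (le_F (i+2))
  rcases Nat.le_total n (i+2) with hle | hle
  · obtain ⟨K, hK⟩ := Nat.exists_eq_add_of_le hle
    rw [ψ, hK]
    exact (fibWord_add_getD hn h K).symm
  · obtain ⟨K, hK⟩ := Nat.exists_eq_add_of_le hle
    rw [ψ, hK]
    exact fibWord_add_getD (by omega) hi2 K

/-- (6): left period structure: `ψ (F (m+1) + s) = ψ s` for `s < F m`, `m ≥ 1`. -/
lemma psi_add {m s : ℕ} (hm : 1 ≤ m) (h : s < F m) :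
    ψ (F (m+1) + s) = ψ s := by
  have hlt : F (m+1) + s < F (m+2) := by have := F_add2 m; omega
  rw [← psi_spec (n := m+2) (by omega) hlt, ← psi_spec (n := m) hm h]
  show (fibWord (m+1) ++ fibWord m).getD (F (m+1) + s) 0 = _
  rw [List.getD_append_right _ _ _ _ (by rw [length_fibWord]; omega), length_fibWord]
  congr 1
  omega

lemma getD_take {α : Type*} [Inhabited α] (l : List α) (n i : ℕ) (h : i < n) :
    (l.take n).getD i default = l.getD i default := by
  rcases Nat.lt_or_ge i l.length with h'|h'
  · rw [List.getD_eq_getElem _ _ (by simp [List.length_take]; omega),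
      List.getD_eq_getElem _ _ h', List.getElem_take]
  · rw [List.getD_eq_default _ _ (by simp [List.length_take]; omega),
      List.getD_eq_default _ _ h']

/-- Almost commutation of consecutive Fibonacci words. -/
lemma fib_almost_comm (m : ℕ) (hm : 1 ≤ m) :
    (fibWord (m+1) ++ fibWord m).take (F (m+2) - 2) =
    (fibWord m ++ fibWord (m+1)).take (F (m+2) - 2) := by
  induction m with
  | zero => omega
  | succ m ih =>
    rcases Nat.lt_or_ge m 1 with hm1 | hm1
    · interval_cases m
      decide
    · have h1 : F (m+3) = F (m+2) + F (m+1) := F_add2 (m+1)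
      have h2 : F (m+2) = F (m+1) + F m := F_add2 m
      have h3 := F_pos m
      have h5 : 2 ≤ F (m+1) := by
        calc 2 = F 2 := rfl
        _ ≤ F (m+1) := F_mono (by omega)
      have key : F (m+3) - 2 - F (m+1) = F (m+2) - 2 := by omega
      have hlen : (fibWord (m+1)).length ≤ F (m+3) - 2 := by
        rw [length_fibWord]; omega
      have L : ∀ l : List (Fin 2), (fibWord (m+1) ++ l).take (F (m+3) - 2) =
          fibWord (m+1) ++ l.take (F (m+2) - 2) := by
        intro l
        rw [List.take_append, List.take_of_length_le hlen,
          length_fibWord, key]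
      show (fibWord (m+2) ++ fibWord (m+1)).take (F (m+3) - 2) =
        (fibWord (m+1) ++ fibWord (m+2)).take (F (m+3) - 2)
      calc (fibWord (m+2) ++ fibWord (m+1)).take (F (m+3) - 2)
          = (fibWord (m+1) ++ (fibWord m ++ fibWord (m+1))).take (F (m+3) - 2) := by
            rw [show fibWord (m+2) = fibWord (m+1) ++ fibWord m from rfl, List.append_assoc]
        _ = fibWord (m+1) ++ (fibWord m ++ fibWord (m+1)).take (F (m+2) - 2) := L _
        _ = fibWord (m+1) ++ (fibWord (m+1) ++ fibWord m).take (F (m+2) - 2) := by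
            rw [ih hm1]
        _ = (fibWord (m+1) ++ (fibWord (m+1) ++ fibWord m)).take (F (m+3) - 2) := (L _).symm
        _ = (fibWord (m+1) ++ fibWord (m+2)).take (F (m+3) - 2) := rfl

/-- (7): `ψ t = ψ (t - F m)` for `F m ≤ t < F (m+2) - 2`, `m ≥ 1`. -/
lemma psi_sub {m t : ℕ} (hm : 1 ≤ m) (h1 : F m ≤ t) (h2 : t < F (m+2) - 2) :
    ψ t = ψ (t - F m) := by
  have hlt : t < F (m+2) := by omega
  have htm : t - F m < F (m+1) := by
    have h2 : F (m+2) = F (m+1) + F m := F_add2 m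
    omega
  rw [← psi_spec (n := m+2) (by omega) hlt, ← psi_spec (n := m+1) (by omega) htm]
  show (fibWord (m+1) ++ fibWord m).getD t 0 = _
  have d : (0 : Fin 2) = default := rfl
  rw [d, ← getD_take _ (F (m+2) - 2) t h2, fib_almost_comm m hm,
    getD_take _ (F (m+2) - 2) t h2]
  rw [List.getD_append_right _ _ _ _ (by rw [length_fibWord]; exact h1), length_fibWord]

lemma two_le_F {m : ℕ} (hm : 2 ≤ m) : 2 ≤ F m := by
  calc 2 = F 2 := rfl
  _ ≤ F m := F_mono hm

/-- mod version of the period structure, on `[0, F (m+2) - 2)`. -/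
lemma psi_mod {m : ℕ} (hm : 1 ≤ m) : ∀ u, u < F (m+2) - 2 → ψ u = ψ (u % F m) := by
  intro u
  induction u using Nat.strong_induction_on with
  | _ u ih =>
    intro hu
    rcases Nat.lt_or_ge u (F m) with h | h
    · rw [Nat.mod_eq_of_lt h]
    · have hpos := F_pos m
      rw [psi_sub hm h hu, ih (u - F m) (by omega) (by omega),
        Nat.mod_eq_sub_mod h]

/-- mod version of the full period structure on `[0, F (m+1))`. -/
lemma psi_mod_star {m : ℕ} (hm : 2 ≤ m) : ∀ u, u < F (m+1) → ψ u = ψ (u % F m) := by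
  intro u hu
  rcases Nat.lt_or_ge u (F m) with h | h
  · rw [Nat.mod_eq_of_lt h]
  · match m, hm with
    | j + 2, _ =>
      have hu3 : u < F (j+3) := hu
      have h1 : F (j+3) = F (j+2) + F (j+1) := F_add2 (j+1)
      have h2 : F (j+2) = F (j+1) + F j := F_add2 j
      have hs : u - F (j+2) < F (j+1) := by omega
      have he : u = F (j+2) + (u - F (j+2)) := by omega
      have hmod : u % F (j+2) = u - F (j+2) := by
        have hpos := F_pos (j+2)
        rw [Nat.mod_eq_sub_mod h, Nat.mod_eq_of_lt (by omega)]
      rw [hmod]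
      conv_lhs => rw [he]
      exact psi_add (by omega) hs

/-- The two letters just before position `F (m+1)` and `F m` differ (suffix defect). -/
lemma suf_diff2 {m : ℕ} (hm : 2 ≤ m) : ψ (F (m+1) - 2) ≠ ψ (F m - 2) := by
  induction m with
  | zero => omega
  | succ m ih =>
    rcases Nat.lt_or_ge m 2 with h | h
    · interval_cases m
      · omega
      · show ψ (F 3 - 2) ≠ ψ (F 2 - 2)
        decide
    · have h2 : 2 ≤ F m := two_le_F h
      have key : ψ (F (m+2) - 2) = ψ (F m - 2) := by
        have he : F (m+2) - 2 = F (m+1) + (F m - 2) := by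
          have := F_add2 m; omega
        rw [he]
        exact psi_add (by omega) (by omega)
      rw [key]
      exact fun hh => ih h hh.symm

lemma suf_diff1 {m : ℕ} (hm : 2 ≤ m) : ψ (F (m+1) - 1) ≠ ψ (F m - 1) := by
  induction m with
  | zero => omega
  | succ m ih =>
    rcases Nat.lt_or_ge m 2 with h | h
    · interval_cases m
      · omega
      · show ψ (F 3 - 1) ≠ ψ (F 2 - 1)
        decide
    · have h2 : 2 ≤ F m := two_le_F h
      have key : ψ (F (m+2) - 1) = ψ (F m - 1) := by
        have he : F (m+2) - 1 = F (m+1) + (F m - 1) := by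
          have := F_add2 m; omega
        rw [he]
        exact psi_add (by omega) (by omega)
      rw [key]
      exact fun hh => ih h hh.symm

/-- number of occurrences of letter `v` among `ψ 0, ..., ψ (L-1)`. -/
def cnt (L : ℕ) (v : Fin 2) : ℕ := ((Finset.range L).filter (fun s => ψ s = v)).card

lemma cnt_shift (a b : ℕ) (v : Fin 2) (h : ∀ r, r < b → ψ (a + r) = ψ r) :
    ((Finset.Ico a (a+b)).filter (fun s => ψ s = v)).card = cnt b v := by
  rw [cnt]
  apply Finset.card_bij' (i := fun s _ => s - a) (j := fun r _ => a + r)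
  · intro s hs
    simp only [Finset.mem_filter, Finset.mem_Ico] at hs
    simp only [Finset.mem_filter, Finset.mem_range]
    constructor
    · omega
    · rw [← h (s - a) (by omega), show a + (s - a) = s by omega]
      exact hs.2
  · intro r hr
    simp only [Finset.mem_filter, Finset.mem_range] at hr
    simp only [Finset.mem_filter, Finset.mem_Ico]
    exact ⟨by omega, by rw [h r hr.1]; exact hr.2⟩
  · intro s hs
    simp only [Finset.mem_filter, Finset.mem_Ico] at hs
    omega
  · intro r _
    omega

lemma cnt_append (a b : ℕ) (v : Fin 2) (h : ∀ r, r < b → ψ (a + r) = ψ r) :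
    cnt (a+b) v = cnt a v + cnt b v := by
  rw [cnt, cnt, Finset.range_eq_Ico,
    ← Finset.Ico_union_Ico_eq_Ico (Nat.zero_le a) (by omega : a ≤ a + b),
    Finset.filter_union, Finset.card_union_of_disjoint, ← Finset.range_eq_Ico]
  · rw [cnt_shift a b v h]
  · apply Finset.disjoint_filter_filter
    exact Finset.Ico_disjoint_Ico_consecutive 0 a (a+b)

lemma cnt_ones (m : ℕ) : cnt (F (m+1)) 1 = F m := by
  induction m using Nat.strong_induction_on with
  | _ m ih =>
    match m with
    | 0 => decide
    | 1 => decide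
    | j + 2 =>
      have h1 : F (j+3) = F (j+2) + F (j+1) := F_add2 (j+1)
      have key : cnt (F (j+2) + F (j+1)) 1 = cnt (F (j+2)) 1 + cnt (F (j+1)) 1 :=
        cnt_append _ _ _ (fun r hr => psi_add (by omega) hr)
      rw [show F (j+2+1) = F (j+2) + F (j+1) from h1, key,
        ih (j+1) (by omega), ih j (by omega)]
      exact (F_add2 j).symm

lemma cnt_total (L : ℕ) : cnt L 1 + cnt L 0 = L := by
  rw [cnt, cnt]
  have : ∀ s : ℕ, (ψ s = 0) ↔ ¬ (ψ s = 1) := by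
    intro s
    constructor
    · intro h h1; rw [h] at h1; exact absurd h1 (by decide)
    · intro h
      have := Fin.is_lt (ψ s)
      omega
  rw [Finset.filter_congr (fun s _ => this s)]
  rw [Finset.card_filter_add_card_filter_not]
  exact Finset.card_range L

lemma F_coprime (a : ℕ) : Nat.gcd (F (a+1)) (F a) = 1 := by
  induction a with
  | zero => decide
  | succ a ih =>
    rw [show F (a+2) = F (a+1) + F a from F_add2 a, Nat.gcd_comm,
      Nat.gcd_self_add_right]
    exact ih

/-- The key "primitivity engine": the cyclic word `f_m` has no nontrivial cyclic period. -/
lemma cyclic_engine {m d : ℕ} (hm : 2 ≤ m) (hd0 : 0 < d) (hd : d < F m)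
    (hcyc : ∀ r, r < F m → ψ r = ψ ((r + d) % F m)) : False := by
  set q := F m with hq
  have hqpos : 0 < q := F_pos m
  -- iterate the cyclic period
  have hiter : ∀ c r, r < q → ψ r = ψ ((r + c * d) % q) := by
    intro c
    induction c with
    | zero => intro r hr; simp [Nat.mod_eq_of_lt hr]
    | succ c ih =>
      intro r hr
      have h1 := hcyc ((r + c * d) % q) (Nat.mod_lt _ hqpos)
      rw [ih r hr, h1, Nat.mod_add_mod]
      congr 1
      ring_nf
  -- Bezout: reach the gcd
  set G := Nat.gcd d q with hG
  have hGd : G ≤ d := Nat.le_of_dvd hd0 (Nat.gcd_dvd_left d q)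
  have hGq : G ∣ q := Nat.gcd_dvd_right d q
  have hGpos : 0 < G := Nat.gcd_pos_of_pos_left q hd0
  obtain ⟨c, -, hc⟩ := Nat.exists_mul_mod_eq_gcd (k := q) (n := d) (by omega)
  have hcycG : ∀ r, r < q → ψ r = ψ ((r + G) % q) := by
    intro r hr
    have h2 := hiter c r hr
    have e : (r + c * d) % q = (r + G) % q := by
      rw [show r + c * d = r + d * c by ring, Nat.add_mod, hc, Nat.mod_add_mod]
    rwa [e] at h2
  -- genuine period G
  have hper : ∀ s, s + G < q → ψ s = ψ (s + G) := by
    intro s hs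
    have := hcycG s (by omega)
    rwa [Nat.mod_eq_of_lt hs] at this
  -- reduce to residues
  have hres : ∀ s, s < q → ψ s = ψ (s % G) := by
    intro s
    induction s using Nat.strong_induction_on with
    | _ s ih =>
      intro hs
      rcases Nat.lt_or_ge s G with h | h
      · rw [Nat.mod_eq_of_lt h]
      · have e : s - G + G = s := by omega
        have h1 := hper (s - G) (by omega)
        rw [e] at h1
        rw [← h1, ih (s - G) (by omega) (by omega), Nat.mod_eq_sub_mod h]
  -- counting
  set t := q / G with ht
  have hqt : q = G * t := (Nat.mul_div_cancel' hGq).symm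
  have ht2 : 2 ≤ t := by
    rcases Nat.lt_or_ge t 2 with h | h
    · have h1 : t ≤ 1 := by omega
      have h2 : G * t ≤ G * 1 := Nat.mul_le_mul_left G h1
      omega
    · exact h
  have hcnt : ∀ v : Fin 2, ∀ j, G * j ≤ q → cnt (G * j) v = j * cnt G v := by
    intro v j
    induction j with
    | zero => intro _; simp [cnt]
    | succ j ih =>
      intro hj
      have e' : G * (j+1) = G * j + G := by ring
      have hj' : G * j ≤ q := by omega
      have step : cnt (G * j + G) v = cnt (G * j) v + cnt G v := by
        apply cnt_append
        intro r hr
        have h1 : G * j + r < q := by omega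
        rw [hres (G * j + r) h1, Nat.mul_add_mod, Nat.mod_eq_of_lt hr]
      rw [e', step, ih hj']
      try ring
  have hdvd : ∀ v : Fin 2, t ∣ cnt q v := by
    intro v
    refine ⟨cnt G v, ?_⟩
    rw [hqt, hcnt v t (le_of_eq hqt.symm)]
    try ring
  -- contradiction with coprimality of letter counts
  obtain ⟨j, rfl⟩ : ∃ j, m = j + 2 := ⟨m - 2, by omega⟩
  have h1 : cnt q 1 = F (j+1) := cnt_ones (j+1)
  have h0 : cnt q 1 + cnt q 0 = q := cnt_total q
  have h2 : F (j+2) = F (j+1) + F j := F_add2 j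
  have h0' : cnt q 0 = F j := by omega
  have hco := F_coprime j
  have hdvd1 := hdvd 1
  have hdvd0 := hdvd 0
  rw [h1] at hdvd1
  rw [h0'] at hdvd0
  have : t ∣ Nat.gcd (F (j+1)) (F j) := Nat.dvd_gcd hdvd1 hdvd0
  rw [hco] at this
  have := Nat.le_of_dvd (by omega) this
  omega

/-- the window of length `k` at position `i` of the infinite Fibonacci word -/
def win (i k : ℕ) : List (Fin 2) := (List.range k).map (fun t => ψ (i+t))

lemma length_win (i k : ℕ) : (win i k).length = k := by simp [win]

lemma win_getElem (i k t : ℕ) (h : t < k) :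
    (win i k)[t]'(by rw [length_win]; exact h) = ψ (i+t) := by
  simp [win]

lemma win_getD (i k t : ℕ) (h : t < k) : (win i k).getD t 0 = ψ (i+t) := by
  rw [List.getD_eq_getElem _ _ (by rw [length_win]; exact h)]
  exact win_getElem i k t h

lemma win_eq_iff {i j k : ℕ} :
    win i k = win j k ↔ ∀ t, t < k → ψ (i+t) = ψ (j+t) := by
  constructor
  · intro h t ht
    rw [← win_getD i k t ht, ← win_getD j k t ht, h]
  · intro h
    apply List.ext_getElem (by rw [length_win, length_win])
    intro t h1 h2
    rw [length_win] at h1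
    rw [win_getElem i k t h1, win_getElem j k t h1]
    exact h t h1

lemma win_take {i k k' : ℕ} (h : k ≤ k') : (win i k').take k = win i k := by
  simp [win, ← List.map_take, List.take_range, Nat.min_eq_left h]

lemma win_eq_window {n i k : ℕ} (hn : 1 ≤ n) (h : i + k ≤ F n) :
    win i k = ((fibWord n).drop i).take k := by
  apply List.ext_getElem
  · rw [length_win, List.length_take, List.length_drop, length_fibWord]
    omega
  · intro t h1 h2
    rw [length_win] at h1
    rw [win_getElem i k t h1]
    rw [List.getElem_take, List.getElem_drop]
    have hlt : i + t < F n := by omega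
    rw [← psi_spec hn hlt, List.getD_eq_getElem _ _ (by rw [length_fibWord]; exact hlt)]

/-- the finset of length-`k` factors of `fibWord n` -/
noncomputable def Sf (n k : ℕ) : Finset (List (Fin 2)) :=
  Finset.image (fun i => win i k) (Finset.range (F n - k + 1))

lemma factor_set_eq (n k : ℕ) (hn : 1 ≤ n) (hk : 1 ≤ k) (hkF : k ≤ F n) :
    {v : List (Fin 2) | v.length = k ∧ v <:+: fibWord n} = ↑(Sf n k) := by
  ext v
  simp only [Set.mem_setOf_eq, Finset.coe_image, Set.mem_image, Finset.mem_coe,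
    Finset.mem_range, Sf]
  constructor
  · rintro ⟨hlen, s, t, hst⟩
    have hlenF : s.length + k + t.length = F n := by
      have := congrArg List.length hst
      simp [length_fibWord, hlen] at this
      omega
    refine ⟨s.length, by omega, ?_⟩
    rw [win_eq_window hn (by omega), ← hst]
    rw [List.append_assoc, List.drop_left, List.take_left' hlen]
  · rintro ⟨i, hi, rfl⟩
    refine ⟨length_win i k, ?_⟩
    rw [win_eq_window hn (by omega)]
    have h1 : ((fibWord n).drop i).take k <+: (fibWord n).drop i := List.take_prefix _ _
    have h2 : (fibWord n).drop i <:+ fibWord n := List.drop_suffix _ _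
    exact h1.isInfix.trans h2.isInfix

lemma pk_eq (n k : ℕ) (hn : 1 ≤ n) (hk : 1 ≤ k) (hkF : k ≤ F n) :
    pk (fibWord n) k = (Sf n k).card := by
  rw [pk, factor_set_eq n k hn hk hkF, Set.ncard_coe_finset]

lemma Sf_mem {n k : ℕ} {v : List (Fin 2)} :
    v ∈ Sf n k ↔ ∃ i, i ≤ F n - k ∧ v = win i k := by
  simp only [Sf, Finset.mem_image, Finset.mem_range]
  constructor
  · rintro ⟨i, hi, rfl⟩; exact ⟨i, by omega, rfl⟩
  · rintro ⟨i, hi, rfl⟩; exact ⟨i, by omega, rfl⟩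

/-- J1: the suffix of `f_{a+2}` of length `k ≤ F a` also occurs ending at position `F a`. -/
lemma suffix_twin {a k : ℕ} (ha : 1 ≤ a) (hk : k ≤ F a) :
    win (F (a+2) - k) k = win (F a - k) k := by
  rw [win_eq_iff]
  intro t ht
  have h2 : F (a+2) = F (a+1) + F a := F_add2 a
  have e : F (a+2) - k + t = F (a+1) + (F a - k + t) := by omega
  rw [e]
  exact psi_add ha (by omega)

/-- J2: the "right special" twin occurrences. -/
lemma rs_twin {a k : ℕ} (ha : 1 ≤ a) (hk : k + 2 ≤ F (a+1)) :
    win (F (a+2) - 2 - k) k = win (F (a+1) - 2 - k) k := by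
  rw [win_eq_iff]
  intro t ht
  have h2 : F (a+2) = F (a+1) + F a := F_add2 a
  have e : F (a+2) - 2 - k + t = (F (a+1) - 2 - k + t) + F a := by omega
  have h3 := psi_sub (m := a) (t := (F (a+1) - 2 - k + t) + F a) ha (by omega) (by omega)
  have e2 : (F (a+1) - 2 - k + t) + F a - F a = F (a+1) - 2 - k + t := by omega
  rw [e2] at h3
  rw [e, h3]

lemma w1_ne_w2 {a k : ℕ} (ha : 1 ≤ a) (hk : k + 2 ≤ F (a+1)) :
    win (F (a+2) - 2 - k) (k+1) ≠ win (F (a+1) - 2 - k) (k+1) := by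
  intro h
  have h2 : F (a+2) = F (a+1) + F a := F_add2 a
  have hgd := win_eq_iff.mp h k (by omega)
  have e1 : F (a+2) - 2 - k + k = F (a+2) - 2 := by omega
  have e2 : F (a+1) - 2 - k + k = F (a+1) - 2 := by omega
  rw [e1, e2] at hgd
  exact suf_diff2 (by omega) hgd

/-- the +1 step: complexity strictly increases while `k ≤ F a`. -/
lemma step_plus {a k : ℕ} (ha : 1 ≤ a) (hk1 : 1 ≤ k) (hka : k ≤ F a)
    (hka1 : k + 2 ≤ F (a+1)) :
    (Sf (a+2) k).card + 1 ≤ (Sf (a+2) (k+1)).card := by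
  have h2 : F (a+2) = F (a+1) + F a := F_add2 a
  have hFa := F_pos a
  have hFa1 := two_le_F (show 2 ≤ a+1 by omega)
  set w1 := win (F (a+2) - 2 - k) (k+1) with hw1
  set w2 := win (F (a+1) - 2 - k) (k+1) with hw2
  have hne : w1 ≠ w2 := w1_ne_w2 ha hka1
  have hw1mem : w1 ∈ Sf (a+2) (k+1) := Sf_mem.mpr ⟨_, by omega, rfl⟩
  have hw2mem : w2 ∈ Sf (a+2) (k+1) := Sf_mem.mpr ⟨_, by omega, rfl⟩
  have htake : w1.take k = w2.take k := by
    rw [hw1, hw2, win_take (by omega), win_take (by omega)]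
    exact rs_twin ha hka1
  have hsub : Sf (a+2) k ⊆ ((Sf (a+2) (k+1)).erase w2).image (fun v => v.take k) := by
    intro u hu
    obtain ⟨i, hi, rfl⟩ := Sf_mem.mp hu
    -- find an extendable occurrence
    have hext : ∃ i', i' + k + 1 ≤ F (a+2) ∧ win i' k = win i k := by
      rcases Nat.lt_or_ge i (F (a+2) - k) with h | h
      · exact ⟨i, by omega, rfl⟩
      · have hieq : i = F (a+2) - k := by omega
        refine ⟨F a - k, by omega, ?_⟩
        rw [hieq]
        exact (suffix_twin ha hka).symm
    obtain ⟨i', hi', hwi⟩ := hext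
    have hmem : win i' (k+1) ∈ Sf (a+2) (k+1) := Sf_mem.mpr ⟨i', by omega, rfl⟩
    rcases eq_or_ne (win i' (k+1)) w2 with hcase | hcase
    · apply Finset.mem_image.mpr
      refine ⟨w1, Finset.mem_erase.mpr ⟨hne, hw1mem⟩, ?_⟩
      rw [htake, ← hcase, win_take (by omega), hwi]
    · apply Finset.mem_image.mpr
      refine ⟨win i' (k+1), Finset.mem_erase.mpr ⟨hcase, hmem⟩, ?_⟩
      rw [win_take (by omega), hwi]
  calc (Sf (a+2) k).card + 1
      ≤ (((Sf (a+2) (k+1)).erase w2).image (fun v => v.take k)).card + 1 :=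
        by exact Nat.add_le_add_right (Finset.card_le_card hsub) 1
    _ ≤ ((Sf (a+2) (k+1)).erase w2).card + 1 := by
        exact Nat.add_le_add_right (Finset.card_image_le) 1
    _ = (Sf (a+2) (k+1)).card := by
        rw [Finset.card_erase_of_mem hw2mem]
        have := Finset.card_pos.mpr ⟨w2, hw2mem⟩
        omega

/-- the ≥ step on the plateau. -/
lemma step_flat {a k : ℕ} (ha : 1 ≤ a) (hk1 : 1 ≤ k)
    (hka1 : k + 2 ≤ F (a+1)) :
    (Sf (a+2) k).card ≤ (Sf (a+2) (k+1)).card := by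
  have h2 : F (a+2) = F (a+1) + F a := F_add2 a
  have hFa := F_pos a
  set w1 := win (F (a+2) - 2 - k) (k+1) with hw1
  set w2 := win (F (a+1) - 2 - k) (k+1) with hw2
  have hne : w1 ≠ w2 := w1_ne_w2 ha hka1
  have hw1mem : w1 ∈ Sf (a+2) (k+1) := Sf_mem.mpr ⟨_, by omega, rfl⟩
  have hw2mem : w2 ∈ Sf (a+2) (k+1) := Sf_mem.mpr ⟨_, by omega, rfl⟩
  have htake : w1.take k = w2.take k := by
    rw [hw1, hw2, win_take (by omega), win_take (by omega)]
    exact rs_twin ha hka1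
  have hsub : Sf (a+2) k ⊆ insert (win (F (a+2) - k) k)
      (((Sf (a+2) (k+1)).erase w2).image (fun v => v.take k)) := by
    intro u hu
    obtain ⟨i, hi, rfl⟩ := Sf_mem.mp hu
    rcases Nat.lt_or_ge i (F (a+2) - k) with h | h
    · apply Finset.mem_insert.mpr
      right
      have hmem : win i (k+1) ∈ Sf (a+2) (k+1) := Sf_mem.mpr ⟨i, by omega, rfl⟩
      rcases eq_or_ne (win i (k+1)) w2 with hcase | hcase
      · apply Finset.mem_image.mpr
        refine ⟨w1, Finset.mem_erase.mpr ⟨hne, hw1mem⟩, ?_⟩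
        rw [htake, ← hcase, win_take (by omega)]
      · apply Finset.mem_image.mpr
        refine ⟨win i (k+1), Finset.mem_erase.mpr ⟨hcase, hmem⟩, ?_⟩
        rw [win_take (by omega)]
    · have hieq : i = F (a+2) - k := by omega
      rw [hieq]
      exact Finset.mem_insert_self _ _
  calc (Sf (a+2) k).card
      ≤ (insert (win (F (a+2) - k) k)
          (((Sf (a+2) (k+1)).erase w2).image (fun v => v.take k))).card :=
        Finset.card_le_card hsub
    _ ≤ (((Sf (a+2) (k+1)).erase w2).image (fun v => v.take k)).card + 1 :=
        Finset.card_insert_le _ _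
    _ ≤ ((Sf (a+2) (k+1)).erase w2).card + 1 := Nat.add_le_add_right Finset.card_image_le 1
    _ = (Sf (a+2) (k+1)).card := by
        rw [Finset.card_erase_of_mem hw2mem]
        have := Finset.card_pos.mpr ⟨w2, hw2mem⟩
        omega

lemma fin2_cases (x : Fin 2) : x = 0 ∨ x = 1 := by
  omega

lemma psi_zero : ψ 0 = 1 := by decide
lemma psi_one : ψ 1 = 0 := by decide

lemma win_one (i : ℕ) : win i 1 = [ψ i] := by
  simp [win, List.range_succ]

/-- complexity at length 1 is 2. -/
lemma card_Sf_one {n : ℕ} (hn : 2 ≤ n) : (Sf n 1).card = 2 := by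
  have h2 : 2 ≤ F n := two_le_F hn
  have hset : Sf n 1 = {[(1 : Fin 2)], [(0 : Fin 2)]} := by
    apply Finset.Subset.antisymm
    · intro v hv
      obtain ⟨i, _, rfl⟩ := Sf_mem.mp hv
      rw [win_one]
      rcases fin2_cases (ψ i) with h | h <;> rw [h] <;> simp
    · intro v hv
      simp only [Finset.mem_insert, Finset.mem_singleton] at hv
      rcases hv with rfl | rfl
      · exact Sf_mem.mpr ⟨0, by omega, by rw [win_one, psi_zero]⟩
      · exact Sf_mem.mpr ⟨1, by omega, by rw [win_one, psi_one]⟩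
  rw [hset]
  decide

/-- plateau upper bound. -/
lemma plateau_upper {a k : ℕ} (ha : 1 ≤ a) (hk : F a + 1 ≤ k) (hk2 : k ≤ F (a+1) - 1) :
    (Sf (a+2) k).card ≤ F a + 2 := by
  have h2 : F (a+2) = F (a+1) + F a := F_add2 a
  have hFa := F_pos a
  have hFa1 : F a ≤ F (a+1) := F_mono (show a ≤ a+1 by omega)
  set M := F (a+2) - k with hM
  have hMlb : F a + 1 ≤ M := by omega
  set C : Finset ℕ := Finset.range (F a) ∪ {M - 1, M} with hC
  have hsub : Sf (a+2) k ⊆ Finset.image (fun i => win i k) C := by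
    intro v hv
    obtain ⟨i, hi, rfl⟩ := Sf_mem.mp hv
    rcases Nat.lt_or_ge i (F a) with h | h
    · exact Finset.mem_image.mpr ⟨i, by simp [hC, Finset.mem_range, h], rfl⟩
    · rcases Nat.lt_or_ge i (M - 1) with h' | h'
      · -- reduce by F a
        refine Finset.mem_image.mpr ⟨i - F a, ?_, ?_⟩
        · have : i - F a < F a := by
            have h4 : F (a+1) = F a + F (a-1) := by
              have := F_add2 (a-1)
              have e : a - 1 + 2 = a + 1 := by omega
              rw [← e]
              have e2 : a - 1 + 1 = a := by omega
              rw [this]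
              rw [e2]
            have h5 : F (a-1) ≤ F a := F_mono (by omega)
            omega
          simp [hC, Finset.mem_range, this]
        · rw [win_eq_iff]
          intro t ht
          have e : i + t = (i - F a + t) + F a := by omega
          have h3 := psi_sub (m := a) (t := (i - F a + t) + F a) ha (by omega) (by omega)
          have e2 : (i - F a + t) + F a - F a = i - F a + t := by omega
          rw [e2] at h3
          rw [e, h3]
      · refine Finset.mem_image.mpr ⟨i, ?_, rfl⟩
        have : i = M - 1 ∨ i = M := by omega
        simp [hC]
        omega
  calc (Sf (a+2) k).card ≤ (Finset.image (fun i => win i k) C).card :=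
        Finset.card_le_card hsub
    _ ≤ C.card := Finset.card_image_le
    _ ≤ (Finset.range (F a)).card + ({M - 1, M} : Finset ℕ).card := Finset.card_union_le _ _
    _ ≤ F a + 2 := by
        rw [Finset.card_range]
        have : ({M - 1, M} : Finset ℕ).card ≤ 2 := Finset.card_insert_le _ _ |>.trans (by simp)
        omega

/-- engine wrapper: a window equality over a full period inside a periodic region is impossible. -/
lemma engine_win {m x d L : ℕ} (hm : 2 ≤ m) (hd0 : 0 < d) (hd : d < F m)
    (hL : F m ≤ L)
    (heq : ∀ t, t < L → ψ (x + t) = ψ (x + d + t))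
    (hmod : ∀ u, x ≤ u → u < x + d + L → ψ u = ψ (u % F m)) : False := by
  set q := F m with hq
  have hqpos : 0 < q := F_pos m
  apply cyclic_engine hm hd0 hd
  intro r hr
  set t₀ := (q + r - x % q) % q with ht₀
  have ht₀lt : t₀ < q := Nat.mod_lt _ hqpos
  have hxmod : x % q < q := Nat.mod_lt _ hqpos
  have key : (x + t₀) % q = r := by
    rw [Nat.add_mod x t₀ q, Nat.mod_eq_of_lt ht₀lt, ht₀, Nat.add_mod_mod]
    have e : x % q + (q + r - x % q) = q + r := by omega
    rw [e, Nat.add_mod_left, Nat.mod_eq_of_lt hr]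
  calc ψ r = ψ ((x + t₀) % q) := by rw [key]
    _ = ψ (x + t₀) := (hmod (x + t₀) (by omega) (by omega)).symm
    _ = ψ (x + d + t₀) := heq t₀ (by omega)
    _ = ψ ((x + d + t₀) % q) := hmod _ (by omega) (by omega)
    _ = ψ ((r + d) % q) := by
        have e3 : x + d + t₀ = (x + t₀) + d := by ring
        rw [e3, ← Nat.mod_add_mod, key]

lemma F_succ_eq {a : ℕ} (ha : 1 ≤ a) : F (a+1) = F a + F (a-1) := by
  have h := F_add2 (a-1)
  have e : a - 1 + 2 = a + 1 := by omega
  have e2 : a - 1 + 1 = a := by omega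
  rw [← e, h, e2]

lemma F_lt_succ' {a : ℕ} (ha : 1 ≤ a) : F a < F (a+1) := by
  have := F_succ_eq ha
  have := F_pos (a-1)
  omega

/-- top range: all windows distinct. -/
lemma top_card {a k : ℕ} (ha : 1 ≤ a) (hk : F (a+1) ≤ k) (hk2 : k ≤ F (a+2)) :
    (Sf (a+2) k).card = F (a+2) - k + 1 := by
  have h2 : F (a+2) = F (a+1) + F a := F_add2 a
  have hFa : F a < F (a+1) := F_lt_succ' ha
  set M := F (a+2) - k with hM
  have hMFa : M ≤ F a := by omega
  have hno : ∀ i j, i ≤ M → j ≤ M → i < j → win i k = win j k → False := by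
    intro i j hi hj hij hw
    set d := j - i with hd
    have hd0 : 0 < d := by omega
    have heq : ∀ t, t < k → ψ (i + t) = ψ (i + d + t) := by
      intro t ht
      have := win_eq_iff.mp hw t ht
      rw [this]
      congr 1
      omega
    apply engine_win (m := a+1) (x := i) (d := d) (L := k) (by omega) hd0 (by omega) hk heq
    intro u hu1 hu2
    exact psi_mod_star (m := a+1) (by omega) u (show u < F (a+2) by omega)
  have hinj : Set.InjOn (fun i => win i k) ↑(Finset.range (F (a+2) - k + 1)) := by
    intro i hi j hj hij
    simp only [Finset.coe_range, Set.mem_Iio] at hi hj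
    by_contra hne
    rcases Nat.lt_or_ge i j with h | h
    · exact hno i j (by omega) (by omega) h hij
    · exact hno j i (by omega) (by omega) (by omega) hij.symm
  calc (Sf (a+2) k).card
      = (Finset.range (F (a+2) - k + 1)).card := Finset.card_image_of_injOn hinj
    _ = F (a+2) - k + 1 := Finset.card_range _

/-- lower bound chain. -/
lemma low_chain {a : ℕ} (ha : 1 ≤ a) : ∀ k, 1 ≤ k → k ≤ F a + 1 → k + 1 ≤ F (a+1) →
    k + 1 ≤ (Sf (a+2) k).card := by
  intro k
  induction k with
  | zero => omega
  | succ k ih =>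
    intro _ hka hk2
    rcases Nat.lt_or_ge k 1 with hk0 | hk0
    · have : k = 0 := by omega
      subst this
      rw [card_Sf_one (by omega)]
    · have h1 := step_plus (k := k) ha hk0 (by omega) (by omega)
      have h2 := ih hk0 (by omega) (by omega)
      omega

/-- upper bound chain (downward from the plateau). -/
lemma up_chain {a : ℕ} (ha : 3 ≤ a) : ∀ j, j ≤ F a → (Sf (a+2) (F a + 1 - j)).card ≤ F a + 2 - j := by
  have hF : F (a+1) = F a + F (a-1) := F_succ_eq (by omega)
  have hF2 : 2 ≤ F (a-1) := two_le_F (by omega)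
  intro j
  induction j with
  | zero =>
    intro _
    have := plateau_upper (a := a) (k := F a + 1) (by omega) (by omega) (by omega)
    simpa using this
  | succ j ih =>
    intro hj
    have hFa := F_pos a
    have e : F a + 1 - j = (F a - j) + 1 := by omega
    have h1 := step_plus (a := a) (k := F a - j) (by omega) (by omega) (by omega) (by omega)
    have h2 := ih (by omega)
    rw [e] at h2
    have e2 : F a + 1 - (j + 1) = F a - j := by omega
    rw [e2]
    omega

/-- plateau lower chain. -/
lemma flat_chain {a : ℕ} (ha : 3 ≤ a) : ∀ k, F a + 1 ≤ k → k ≤ F (a+1) - 1 →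
    F a + 2 ≤ (Sf (a+2) k).card := by
  have hF : F (a+1) = F a + F (a-1) := F_succ_eq (by omega)
  have hF2 : 2 ≤ F (a-1) := two_le_F (by omega)
  have hFa := F_pos a
  intro k
  induction k with
  | zero => omega
  | succ k ih =>
    intro h1 h2
    rcases Nat.lt_or_ge k (F a + 1) with h | h
    · have : k + 1 = F a + 1 := by omega
      rw [this]
      exact low_chain (by omega) (F a + 1) (by omega) (by omega) (by omega)
    · have hs := step_flat (a := a) (k := k) (by omega) (by omega) (by omega)
      have := ih h (by omega)
      omega

lemma small_card {a k : ℕ} (ha : 1 ≤ a) (hk1 : 1 ≤ k) (hk : k ≤ F a) :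
    (Sf (a+2) k).card = k + 1 := by
  have hF : F (a+1) = F a + F (a-1) := F_succ_eq ha
  have hF1 : 1 ≤ F (a-1) := F_pos _
  have hlow := low_chain ha k hk1 (by omega) (by omega)
  rcases Nat.lt_or_ge a 3 with ha3 | ha3
  · interval_cases a
    · have hFa : F 1 = 1 := rfl
      have : k = 1 := by omega
      subst this
      rw [card_Sf_one (by omega)]
    · have hFa : F 2 = 2 := rfl
      have hF3 : F 3 = 3 := rfl
      rcases (by omega : k = 1 ∨ k = 2) with rfl | rfl
      · rw [card_Sf_one (by omega)]
      · have hup : (Sf 4 2).card ≤ 3 := by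
          have hsub : Sf 4 2 ⊆ Finset.image (fun i => win i 2) (Finset.range 3) := by
            intro v hv
            obtain ⟨i, hi, rfl⟩ := Sf_mem.mp hv
            have hF4 : F 4 = 5 := rfl
            rcases Nat.lt_or_ge i 3 with h | h
            · exact Finset.mem_image.mpr ⟨i, Finset.mem_range.mpr h, rfl⟩
            · have hi3 : i = 3 := by omega
              subst hi3
              refine Finset.mem_image.mpr ⟨0, by simp, ?_⟩
              rw [win_eq_iff]
              intro t ht
              have h := psi_add (m := 2) (by omega) (show t < F 2 by omega)
              show ψ (0 + t) = ψ (F 3 + t)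
              rw [h, Nat.zero_add]
          calc (Sf 4 2).card ≤ _ := Finset.card_le_card hsub
            _ ≤ (Finset.range 3).card := Finset.card_image_le
            _ = 3 := Finset.card_range 3
        have hup' : (Sf (2+2) 2).card ≤ 3 := hup
        omega
  · have hup := up_chain ha3 (F a + 1 - k) (by omega)
    have e : F a + 1 - (F a + 1 - k) = k := by omega
    rw [e] at hup
    omega

lemma plateau_card {a k : ℕ} (ha3 : 3 ≤ a) (h1 : F a + 1 ≤ k) (h2 : k ≤ F (a+1) - 1) :
    (Sf (a+2) k).card = F a + 2 :=
  le_antisymm (plateau_upper (by omega) h1 h2) (flat_chain ha3 k h1 h2)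

theorem stmt7' (a : ℕ) :
    (∀ k, 1 ≤ k → k ≤ F a → pk (fibWord (a+2)) k = k + 1) ∧
    (∀ k, F a + 1 ≤ k → k ≤ F (a+1) - 1 → pk (fibWord (a+2)) k = F a + 2) ∧
    (∀ k, F (a+1) ≤ k → k ≤ F (a+2) → pk (fibWord (a+2)) k = F (a+2) + 1 - k) := by
  have hmono1 : F a ≤ F (a+2) := F_mono (by omega)
  have hmono2 : F (a+1) ≤ F (a+2) := F_mono (by omega)
  refine ⟨?_, ?_, ?_⟩
  · intro k hk1 hk2
    rw [pk_eq (a+2) k (by omega) hk1 (by omega)]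
    rcases Nat.lt_or_ge a 1 with ha | ha
    · have ha0 : a = 0 := by omega
      subst ha0
      have : k = 1 := by
        have : F 0 = 1 := rfl
        omega
      subst this
      rw [card_Sf_one (by omega)]
    · exact small_card ha hk1 hk2
  · intro k h1 h2
    have hk1 : 1 ≤ k := by have := F_pos a; omega
    rw [pk_eq (a+2) k (by omega) hk1 (by omega)]
    rcases Nat.lt_or_ge a 3 with ha3 | ha3
    · exfalso
      interval_cases a
      · have q1 : F 0 = 1 := rfl
        have q2 : F (0+1) = 1 := rfl
        omega
      · have q1 : F 1 = 1 := rfl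
        have q2 : F (1+1) = 2 := rfl
        omega
      · have q1 : F 2 = 2 := rfl
        have q2 : F (2+1) = 3 := rfl
        omega
    · exact plateau_card ha3 h1 h2
  · intro k h1 h2
    have hk1 : 1 ≤ k := by have := F_pos (a+1); omega
    rw [pk_eq (a+2) k (by omega) hk1 h2]
    rcases Nat.lt_or_ge a 1 with ha | ha
    · have ha0 : a = 0 := by omega
      subst ha0
      have e1 : F (0+1) = 1 := rfl
      have e2 : F (0+2) = 2 := rfl
      rcases (by omega : k = 1 ∨ k = 2) with rfl | rfl
      · rw [card_Sf_one (by omega)]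
        omega
      · have hS : (Sf (0+2) 2).card = 1 := by
          rw [Sf]
          norm_num [e2, Finset.range_one]
        omega
    · rw [top_card ha h1 h2]
      omega

/-- factor complexity of the finite Fibonacci word f_n, n ≥ 2. -/
theorem stmt7 (n : ℕ) (hn : 2 ≤ n) :
    (∀ k, 1 ≤ k → k ≤ F (n - 2) → pk (fibWord n) k = k + 1) ∧
    (∀ k, F (n - 2) + 1 ≤ k → k ≤ F (n - 1) - 1 → pk (fibWord n) k = F (n - 2) + 2) ∧
    (∀ k, F (n - 1) ≤ k → k ≤ F n → pk (fibWord n) k = F n + 1 - k) := by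
  obtain ⟨a, rfl⟩ : ∃ a, n = a + 2 := ⟨n - 2, by omega⟩
  have e2 : a + 2 - 2 = a := by omega
  have e1 : a + 2 - 1 = a + 1 := by omega
  rw [e2, e1]
  exact stmt7' a
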